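/- The Dirichlet-multinomial distribution s_a = C(N; a_1,...,a_n) · (Π_{i=1}^n (α)_{a_i}) / (nα)_N, with α = Nμ/(n-1-nμ), satisfies the detailed balance condition s_a · T_a^{a+i_{jk}} = s_{a+i_{jk}} · T_{a+i_{jk}}^a for the neutral Moran process with uniform mutation, where T_a^{a+i_{jk}} = (ā_j(1-μ) + (μ/(n-1))(1-ā_j)) · ā_k. -/

import Mathlib

open Real Finset

/-- Rising factorial `(x)_k = x (x+1) ⋯ (x+k-1)`, with `(x)_0 = 1`. -/
noncomputable def risingFac (x : ℝ) (k : ℕ) : ℝ :=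
  ∏ i ∈ Finset.range k, (x + (i : ℝ))

lemma risingFac_succ (x : ℝ) (m : ℕ) :
    risingFac x (m + 1) = risingFac x m * (x + m) := Finset.prod_range_succ _ _

@[to_additive split_two_sum]
lemma split_two {M : Type*} [CommMonoid M] {n : ℕ} (j k : Fin n) (hjk : j ≠ k)
    (g : Fin n → M) :
    ∏ i, g i = g k * (g j * ∏ i ∈ (Finset.univ.erase k).erase j, g i) := by
  rw [← Finset.mul_prod_erase Finset.univ g (Finset.mem_univ k),
    ← Finset.mul_prod_erase _ g (Finset.mem_erase.mpr ⟨hjk, Finset.mem_univ j⟩)]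

/-- The Dirichlet-multinomial distribution
`s_a = C(N;a) (∏_i (α)_{a_i}) / (nα)_N`, with `α = Nμ/(n-1-nμ)`, satisfies the
detailed balance condition `s_a T_a^{a+i_{jk}} = s_{a+i_{jk}} T_{a+i_{jk}}^a` for the
neutral Moran process with uniform mutation, where
`T_a^{a+i_{jk}} = (ā_j(1-μ) + (μ/(n-1))(1-ā_j)) ā_k`. -/
theorem dirichlet_multinomial_detailed_balance (n N : ℕ) (hn : 2 ≤ n) (hN : 0 < N)
    (μ : ℝ) (hμ : μ ∈ Set.Ioo (0 : ℝ) (((n : ℝ) - 1) / n))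
    (α : ℝ) (hα : α = (N : ℝ) * μ / ((n : ℝ) - 1 - n * μ))
    (a : Fin n → ℕ) (ha : ∑ i, a i = N)
    (j k : Fin n) (hjk : j ≠ k) (hak : 1 ≤ a k) :
    let s : (Fin n → ℕ) → ℝ := fun c =>
      (Nat.multinomial Finset.univ c : ℝ) * (∏ i, risingFac α (c i)) / risingFac ((n : ℝ) * α) N
    let T : (Fin n → ℕ) → Fin n → Fin n → ℝ := fun c u v =>
      (((c u : ℝ) / N) * (1 - μ) + μ / ((n : ℝ) - 1) * (1 - (c u : ℝ) / N)) * ((c v : ℝ) / N)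
    let b : Fin n → ℕ := Function.update (Function.update a j (a j + 1)) k (a k - 1)
    s a * T a j k = s b * T b k j := by
  intro s T b
  have hbj : b j = a j + 1 := by
    simp [b, Function.update_of_ne hjk, Function.update_self]
  have hbk : b k = a k - 1 := by
    simp [b, Function.update_self]
  have hbi : ∀ i, i ≠ j → i ≠ k → b i = a i := by
    intro i hij hik
    simp [b, Function.update_of_ne hik, Function.update_of_ne hij]
  -- basic positivity facts
  have hN' : ((N : ℝ)) ≠ 0 := Nat.cast_pos.mpr hN |>.ne'
  have hn1 : (0:ℝ) < (n : ℝ) - 1 := by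
    have : (2:ℝ) ≤ n := by exact_mod_cast hn
    linarith
  have hnpos : (0:ℝ) < n := by linarith
  have hden : (0:ℝ) < (n : ℝ) - 1 - n * μ := by
    have h2 := hμ.2
    rw [lt_div_iff₀ hnpos] at h2
    nlinarith
  -- the sum of b is N
  have hsum_b : ∑ i, b i = N := by
    have h1 : ∑ i, b i = b k + (b j + ∑ i ∈ (Finset.univ.erase k).erase j, b i) :=
      split_two_sum j k hjk b
    have h2 : ∑ i, a i = a k + (a j + ∑ i ∈ (Finset.univ.erase k).erase j, a i) :=
      split_two_sum j k hjk a
    have h3 : ∑ i ∈ (Finset.univ.erase k).erase j, b i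
        = ∑ i ∈ (Finset.univ.erase k).erase j, a i := by
      refine Finset.sum_congr rfl fun i hi => ?_
      simp only [Finset.mem_erase] at hi
      exact hbi i hi.1 hi.2.1
    rw [h1, hbj, hbk, h3]
    rw [h2] at ha
    omega
  set E := (Finset.univ.erase k).erase j with hE
  -- multinomial identity
  have hspec_a := Nat.multinomial_spec Finset.univ a
  have hspec_b := Nat.multinomial_spec Finset.univ b
  rw [ha] at hspec_a
  rw [hsum_b] at hspec_b
  rw [mul_comm] at hspec_a hspec_b
  have hfac : (∏ i, (b i).factorial) * a k = (∏ i, (a i).factorial) * (a j + 1) := by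
    rw [split_two j k hjk (fun i => (b i).factorial),
      split_two j k hjk (fun i => (a i).factorial)]
    have h3 : ∏ i ∈ E, (b i).factorial = ∏ i ∈ E, (a i).factorial := by
      refine Finset.prod_congr rfl fun i hi => ?_
      simp only [hE, Finset.mem_erase] at hi
      rw [hbi i hi.1 hi.2.1]
    have hk : (a k).factorial = a k * (a k - 1).factorial := by
      have : a k = (a k - 1) + 1 := by omega
      rw [this, Nat.factorial_succ]
      simp
    rw [h3, hbj, hbk, hk, Nat.factorial_succ]
    try ring
  have hM : (Nat.multinomial Finset.univ b : ℝ) * (a j + 1)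
      = (Nat.multinomial Finset.univ a : ℝ) * (a k) := by
    have hNat : Nat.multinomial Finset.univ b * (a j + 1) * (∏ i, (a i).factorial)
        = Nat.multinomial Finset.univ a * a k * (∏ i, (a i).factorial) := by
      calc Nat.multinomial Finset.univ b * (a j + 1) * (∏ i, (a i).factorial)
          = Nat.multinomial Finset.univ b * ((∏ i, (a i).factorial) * (a j + 1)) := by ring
        _ = Nat.multinomial Finset.univ b * ((∏ i, (b i).factorial) * a k) := by rw [hfac]
        _ = (Nat.multinomial Finset.univ b * ∏ i, (b i).factorial) * a k := by ring
        _ = N.factorial * a k := by rw [hspec_b]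
        _ = (Nat.multinomial Finset.univ a * ∏ i, (a i).factorial) * a k := by rw [hspec_a]
        _ = Nat.multinomial Finset.univ a * a k * (∏ i, (a i).factorial) := by ring
    have hpos : 0 < ∏ i, (a i).factorial :=
      Finset.prod_pos fun i _ => Nat.factorial_pos _
    have := Nat.eq_of_mul_eq_mul_right hpos hNat
    exact_mod_cast this
  -- rising factorial product identity
  have hcast : ((a k - 1 : ℕ) : ℝ) = (a k : ℝ) - 1 := by
    push_cast [hak]; ring
  have hP : (∏ i, risingFac α (b i)) * (α + (a k : ℝ) - 1)
      = (∏ i, risingFac α (a i)) * (α + (a j : ℝ)) := by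
    rw [split_two j k hjk (fun i => risingFac α (b i)),
      split_two j k hjk (fun i => risingFac α (a i))]
    have h3 : ∏ i ∈ E, risingFac α (b i) = ∏ i ∈ E, risingFac α (a i) := by
      refine Finset.prod_congr rfl fun i hi => ?_
      simp only [hE, Finset.mem_erase] at hi
      rw [hbi i hi.1 hi.2.1]
    have hk : risingFac α (a k) = risingFac α (a k - 1) * (α + ((a k : ℝ) - 1)) := by
      have h : a k = (a k - 1) + 1 := by omega
      calc risingFac α (a k) = risingFac α ((a k - 1) + 1) := by rw [← h]
        _ = risingFac α (a k - 1) * (α + ((a k - 1 : ℕ) : ℝ)) := risingFac_succ _ _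
        _ = risingFac α (a k - 1) * (α + ((a k : ℝ) - 1)) := by rw [hcast]
    rw [h3, hbj, hbk, hk, risingFac_succ]
    push_cast
    ring
  -- transition probability in closed form
  have hT : ∀ x : ℝ, (x / N) * (1 - μ) + μ / ((n : ℝ) - 1) * (1 - x / N)
      = (((n : ℝ) - 1 - n * μ) / ((n : ℝ) - 1)) * ((α + x) / N) := by
    intro x
    rw [hα]
    field_simp [show (n : ℝ) - 1 - μ * n ≠ 0 by linarith]
    ring
  -- final computation
  simp only [s, T, hbj, hbk]
  rw [hcast, hT ((a j : ℝ)), hT ((a k : ℝ) - 1),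
    div_mul_eq_mul_div ((Nat.multinomial Finset.univ a : ℝ) * ∏ i, risingFac α (a i))
      (risingFac ((n : ℝ) * α) N),
    div_mul_eq_mul_div ((Nat.multinomial Finset.univ b : ℝ) * ∏ i, risingFac α (b i))
      (risingFac ((n : ℝ) * α) N)]
  congr 1
  push_cast
  set Ma := (Nat.multinomial Finset.univ a : ℝ)
  set Mb := (Nat.multinomial Finset.univ b : ℝ)
  set Pa := ∏ i, risingFac α (a i)
  set Pb := ∏ i, risingFac α (b i)
  have key : Ma * Pa * ((α + (a j : ℝ)) * (a k : ℝ))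
      = Mb * Pb * ((α + (a k : ℝ) - 1) * ((a j : ℝ) + 1)) := by
    linear_combination (-(Pa * (α + (a j : ℝ)))) * hM - (Mb * ((a j : ℝ) + 1)) * hP
  linear_combination ((((n : ℝ) - 1 - n * μ) / ((n : ℝ) - 1)) / ((N : ℝ) * N)) * key
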